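/- arXiv:2301.12963 — 2 statements merged into one kernel-verified Lean document; each statement's English description precedes it below -/
import Mathlib

section
/- Suppose (X, d) is a compact M-doubling metric space. Then for every ε > 0 and every k ∈ ℕ, X admits a (K, ε, kε)-Cantor decomposition with K = M^⌈2 + log₂(k+3)⌉: there is an open cover of X partitioned into K+1 subfamilies, each set of diameter < ε, and any two distinct sets in the same subfamily at distance > kε. -/
/-- The distance between two sets: the infimum of pairwise distances. -/
noncomputable def setDist {X : Type*} [MetricSpace X] (U V : Set X) : ℝ :=
  sInf (Set.image2 dist U V)

/-- A `(K, ε, δ)`-Cantor decomposition of `X`: an open cover split into `K+1`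
subfamilies, each member of diameter `< ε`, with distinct members of the same
subfamily at distance `> δ`. -/
def IsCantorDecomp {X : Type*} [MetricSpace X] (K : ℕ) (ε δ : ℝ)
    (U : Fin (K + 1) → Set (Set X)) : Prop :=
  (∀ i, ∀ u ∈ U i, IsOpen u) ∧
  (∀ x : X, ∃ i, ∃ u ∈ U i, x ∈ u) ∧
  (∀ i, ∀ u ∈ U i, Metric.diam u < ε) ∧
  (∀ i, ∀ u ∈ U i, ∀ v ∈ U i, u ≠ v → δ < setDist u v)


/-- `ncard` of a separated-out subset of a finset equals the card of the filter. -/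
lemma ncard_filter_eq {X : Type*} (S : Finset X) (p : X → Prop) [DecidablePred p] :
    Set.ncard {y | y ∈ (S : Set X) ∧ p y} = (S.filter p).card := by
  rw [← Set.ncard_coe_finset]
  congr 1
  ext y
  simp

/-- Greedy coloring: a symmetric relation with degrees `≤ K` on a finite set
admits a proper `(K+1)`-coloring. -/
lemma greedy_coloring {X : Type*} (K : ℕ) (near : X → X → Prop)
    (hsym : ∀ x y, near x y → near y x) :
    ∀ S : Finset X,
      (∀ x ∈ S, Set.ncard {y ∈ (S : Set X) | y ≠ x ∧ near x y} ≤ K) →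
      ∃ c : X → Fin (K + 1), ∀ x ∈ S, ∀ y ∈ S, x ≠ y → near x y → c x ≠ c y := by
  classical
  intro S
  induction S using Finset.induction_on with
  | empty => intro _; exact ⟨fun _ => 0, by simp⟩
  | @insert a T haT ih =>
    intro hdeg0
    have hdeg : ∀ x ∈ insert a T,
        ((insert a T).filter (fun y => y ≠ x ∧ near x y)).card ≤ K := by
      intro x hx
      have := hdeg0 x hx
      rwa [ncard_filter_eq] at this
    obtain ⟨c, hc⟩ := ih (fun x hx => by
      rw [ncard_filter_eq]
      refine le_trans (Finset.card_le_card ?_) (hdeg x (Finset.mem_insert_of_mem hx))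
      exact Finset.filter_subset_filter _ (Finset.subset_insert a T))
    set N : Finset X := T.filter (fun y => near a y) with hN
    have hNcard : N.card ≤ K := by
      refine le_trans (Finset.card_le_card ?_) (hdeg a (Finset.mem_insert_self a T))
      intro y hy
      rw [hN, Finset.mem_filter] at hy
      refine Finset.mem_filter.mpr ⟨Finset.mem_insert_of_mem hy.1, ?_, hy.2⟩
      rintro rfl; exact haT hy.1
    have : ∃ i : Fin (K + 1), i ∉ N.image c := by
      by_contra h
      push_neg at h
      have h1 : (Finset.univ : Finset (Fin (K + 1))).card ≤ (N.image c).card :=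
        Finset.card_le_card (fun i _ => h i)
      have h2 : (N.image c).card ≤ N.card := Finset.card_image_le
      simp only [Finset.card_univ, Fintype.card_fin] at h1
      omega
    obtain ⟨i, hi⟩ := this
    refine ⟨Function.update c a i, ?_⟩
    intro x hx y hy hxy hnear
    rcases Finset.mem_insert.mp hx with rfl | hxT
    · rcases Finset.mem_insert.mp hy with rfl | hyT
      · exact absurd rfl hxy
      · have hya : y ≠ x := fun h => haT (h ▸ hyT)
        rw [Function.update_self, Function.update_of_ne hya]
        intro h
        exact hi (h ▸ Finset.mem_image_of_mem c
          (by rw [hN, Finset.mem_filter]; exact ⟨hyT, hnear⟩))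
    · rcases Finset.mem_insert.mp hy with rfl | hyT
      · have hxa : x ≠ y := fun h => haT (h ▸ hxT)
        rw [Function.update_self, Function.update_of_ne hxa]
        intro h
        exact hi (h ▸ Finset.mem_image_of_mem c
          (by rw [hN, Finset.mem_filter]; exact ⟨hxT, hsym _ _ hnear⟩))
      · have hxa : x ≠ a := fun h => haT (h ▸ hxT)
        have hya : y ≠ a := fun h => haT (h ▸ hyT)
        rw [Function.update_of_ne hxa, Function.update_of_ne hya]
        exact hc x hxT y hyT hxy hnear

/-- In an `M`-doubling space, a `2r`-separated set inside a ball of radius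
`2^j * r` has at most `M^j` points. -/
lemma doubling_count {X : Type*} [MetricSpace X] (M : ℕ)
    (hdoubling : ∀ (r : ℝ), 0 < r → ∀ x : X,
      ∃ s : Finset X, s.card ≤ M ∧
        Metric.closedBall x (2 * r) ⊆ ⋃ y ∈ s, Metric.closedBall y r)
    (r : ℝ) (hr : 0 < r) :
    ∀ (j : ℕ) (x : X) (P : Finset X),
      (∀ p ∈ P, ∀ q ∈ P, p ≠ q → 2 * r < dist p q) →
      (∀ p ∈ P, p ∈ Metric.closedBall x (2 ^ j * r)) → P.card ≤ M ^ j := by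
  classical
  intro j
  induction j with
  | zero =>
    intro x P hsep hsub
    simp only [pow_zero, one_mul] at hsub ⊢
    refine Finset.card_le_one.mpr (fun a ha b hb => ?_)
    by_contra hab
    have h1 := hsep a ha b hb hab
    have h2 := Metric.mem_closedBall.mp (hsub a ha)
    have h3 := Metric.mem_closedBall.mp (hsub b hb)
    have h4 : dist a b ≤ dist a x + dist x b := dist_triangle a x b
    rw [dist_comm x b] at h4
    linarith
  | succ j ih =>
    intro x P hsep hsub
    obtain ⟨s0, hs0card, hs0cov⟩ := hdoubling (2 ^ j * r) (by positivity) x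
    have hmem : ∀ p ∈ P, ∃ y ∈ s0, p ∈ Metric.closedBall y (2 ^ j * r) := by
      intro p hp
      have h1 : p ∈ Metric.closedBall x (2 * (2 ^ j * r)) := by
        have := hsub p hp
        rwa [show (2 : ℝ) ^ (j + 1) * r = 2 * (2 ^ j * r) by ring] at this
      have := hs0cov h1
      simpa using this
    have hPsub : P ⊆ s0.biUnion
        (fun y => P.filter (fun p => p ∈ Metric.closedBall y (2 ^ j * r))) := by
      intro p hp
      obtain ⟨y, hy, hpy⟩ := hmem p hp
      exact Finset.mem_biUnion.mpr ⟨y, hy, Finset.mem_filter.mpr ⟨hp, hpy⟩⟩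
    calc P.card ≤ _ := Finset.card_le_card hPsub
      _ ≤ ∑ y ∈ s0, (P.filter (fun p => p ∈ Metric.closedBall y (2 ^ j * r))).card :=
          Finset.card_biUnion_le
      _ ≤ ∑ _y ∈ s0, M ^ j := by
          refine Finset.sum_le_sum (fun y hy => ?_)
          refine ih y _ (fun p hp q hq hpq =>
              hsep p (Finset.mem_of_mem_filter p hp) q (Finset.mem_of_mem_filter q hq) hpq)
            (fun p hp => (Finset.mem_filter.mp hp).2)
      _ = s0.card * M ^ j := by rw [Finset.sum_const, smul_eq_mul]
      _ ≤ M * M ^ j := Nat.mul_le_mul_right _ hs0card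
      _ = M ^ (j + 1) := by rw [pow_succ]; ring

/-- A finite set contains a maximal `s`-separated subset, which is an `s`-net. -/
lemma exists_maximal_separated {X : Type*} [MetricSpace X] (t : Finset X) (s : ℝ)
    (hs : 0 ≤ s) :
    ∃ S : Finset X, S ⊆ t ∧ (∀ x ∈ S, ∀ y ∈ S, x ≠ y → s < dist x y) ∧
      ∀ y ∈ t, ∃ x ∈ S, dist y x ≤ s := by
  classical
  set F := t.powerset.filter
    (fun S : Finset X => ∀ x ∈ S, ∀ y ∈ S, x ≠ y → s < dist x y) with hF
  have hne : F.Nonempty := ⟨∅, by simp [hF]⟩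
  obtain ⟨S, hSF, hmax⟩ := F.exists_max_image (fun S => S.card) hne
  rw [hF, Finset.mem_filter, Finset.mem_powerset] at hSF
  refine ⟨S, hSF.1, hSF.2, ?_⟩
  intro y hy
  by_cases hyS : y ∈ S
  · exact ⟨y, hyS, by simp [hs]⟩
  · by_contra h
    push_neg at h
    have hins : insert y S ∈ F := by
      rw [hF, Finset.mem_filter, Finset.mem_powerset]
      refine ⟨Finset.insert_subset hy hSF.1, ?_⟩
      intro a ha b hb hab
      rcases Finset.mem_insert.mp ha with rfl | haS
      · rcases Finset.mem_insert.mp hb with rfl | hbS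
        · exact absurd rfl hab
        · exact h b hbS
      · rcases Finset.mem_insert.mp hb with rfl | hbS
        · rw [dist_comm]; exact h a haS
        · exact hSF.2 a haS b hbS hab
    have := hmax _ hins
    rw [Finset.card_insert_of_notMem hyS] at this
    omega

/-- The key power bound: `4(k+3) ≤ 2^⌈2 + log₂(k+3)⌉`. -/
lemma pow_ceil_bound (k : ℕ) :
    (4 : ℝ) * (k + 3) ≤ 2 ^ (⌈2 + Real.logb 2 (k + 3)⌉₊) := by
  have hk3 : (0 : ℝ) < (k : ℝ) + 3 := by positivity
  have h1 : (2 : ℝ) ^ ((2 : ℝ) + Real.logb 2 (k + 3)) = 4 * ((k : ℝ) + 3) := by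
    rw [Real.rpow_add (by norm_num), Real.rpow_logb (by norm_num) (by norm_num) hk3]
    norm_num
  have h2 : (2 : ℝ) ^ ((2 : ℝ) + Real.logb 2 (k + 3)) ≤
      (2 : ℝ) ^ ((⌈2 + Real.logb 2 (k + 3)⌉₊ : ℕ) : ℝ) :=
    Real.rpow_le_rpow_of_exponent_le one_le_two (Nat.le_ceil _)
  rw [Real.rpow_natCast] at h2
  linarith [h1 ▸ h2]

/-- A compact `M`-doubling metric space admits, for every `ε > 0` and `k ∈ ℕ`, a
`(K, ε, kε)`-Cantor decomposition with `K = M^⌈2 + log₂(k+3)⌉`. -/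
theorem stmt_6 {X : Type*} [MetricSpace X] [CompactSpace X] (M : ℕ)
    (hdoubling : ∀ (r : ℝ), 0 < r → ∀ x : X,
      ∃ s : Finset X, s.card ≤ M ∧
        Metric.closedBall x (2 * r) ⊆ ⋃ y ∈ s, Metric.closedBall y r) :
    ∀ (ε : ℝ), 0 < ε → ∀ k : ℕ,
      ∃ U : Fin (M ^ (⌈2 + Real.logb 2 (k + 3)⌉₊) + 1) → Set (Set X),
        IsCantorDecomp (M ^ (⌈2 + Real.logb 2 (k + 3)⌉₊)) ε (k * ε) U := by
  classical
  intro ε hε k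
  set j := ⌈2 + Real.logb 2 (k + 3)⌉₊ with hjdef
  have hk3 : (0 : ℝ) < (k : ℝ) + 3 := by positivity
  have hk3' : ((k : ℝ) + 3) ≠ 0 := ne_of_gt hk3
  -- the constants
  set s : ℝ := ε * (k + 2) / (2 * ((k : ℝ) + 3)) with hsdef
  set r : ℝ := ε * (k + 2) / (4 * ((k : ℝ) + 3)) with hrdef
  set ρ : ℝ := ε * (2 * k + 5) / (4 * ((k : ℝ) + 3)) with hρdef
  set ρ0 : ℝ := ε / (4 * ((k : ℝ) + 3)) with hρ0def
  set R : ℝ := k * ε + 2 * ρ with hRdef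
  have hspos : 0 < s := by rw [hsdef]; positivity
  have hrpos : 0 < r := by rw [hrdef]; positivity
  have hρpos : 0 < ρ := by rw [hρdef]; positivity
  have hρ0pos : 0 < ρ0 := by rw [hρ0def]; positivity
  have hs2r : s = 2 * r := by rw [hsdef, hrdef]; field_simp; ring
  have hsρ0 : s + ρ0 = ρ := by rw [hsdef, hρ0def, hρdef]; field_simp; ring
  have h2ρ : 2 * ρ < ε := by
    rw [hρdef, ← mul_div_assoc, div_lt_iff₀ (by positivity)]
    nlinarith [hε, hk3]
  have hRbound : R ≤ 2 ^ j * r := by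
    have h1 : R < ((k : ℝ) + 1) * ε := by rw [hRdef]; nlinarith [h2ρ, hε]
    have h2 : ((k : ℝ) + 1) * ε ≤ ((k : ℝ) + 2) * ε := by nlinarith [hε]
    have h3 : ((k : ℝ) + 2) * ε = 4 * ((k : ℝ) + 3) * r := by
      rw [hrdef]; field_simp
    have h4 : (4 : ℝ) * ((k : ℝ) + 3) * r ≤ 2 ^ j * r := by
      have := pow_ceil_bound k
      rw [← hjdef] at this
      nlinarith [hrpos]
    linarith
  -- finite net
  obtain ⟨t0, -, ht0fin, ht0cov⟩ :=
    finite_cover_balls_of_compact (isCompact_univ (X := X)) hρ0pos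
  obtain ⟨S, -, hSsep, hSnet⟩ :=
    exists_maximal_separated ht0fin.toFinset s hspos.le
  -- every point is within ρ of S
  have hcover : ∀ x : X, ∃ p ∈ S, dist x p < ρ := by
    intro x
    have hx := ht0cov (Set.mem_univ x)
    simp only [Set.mem_iUnion, Metric.mem_ball] at hx
    obtain ⟨y, hy, hxy⟩ := hx
    obtain ⟨p, hp, hyp⟩ := hSnet y (ht0fin.mem_toFinset.mpr hy)
    refine ⟨p, hp, ?_⟩
    calc dist x p ≤ dist x y + dist y p := dist_triangle x y p
      _ < ρ0 + s := by linarith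
      _ = ρ := by linarith [hsρ0]
  -- degree bound
  have hdeg : ∀ x ∈ S,
      Set.ncard {y ∈ (S : Set X) | y ≠ x ∧ dist x y ≤ R} ≤ M ^ j := by
    intro x hx
    rw [ncard_filter_eq]
    have hsub : S.filter (fun y => y ≠ x ∧ dist x y ≤ R) ⊆
        S.filter (fun y => y ∈ Metric.closedBall x (2 ^ j * r)) := by
      intro y hy
      rw [Finset.mem_filter] at hy ⊢
      refine ⟨hy.1, ?_⟩
      rw [Metric.mem_closedBall, dist_comm]
      linarith [hy.2.2, hRbound]
    refine le_trans (Finset.card_le_card hsub) ?_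
    refine doubling_count M hdoubling r hrpos j x _ ?_ ?_
    · intro p hp q hq hpq
      have := hSsep p (Finset.mem_of_mem_filter p hp) q (Finset.mem_of_mem_filter q hq) hpq
      linarith [hs2r ▸ this]
    · intro p hp
      exact (Finset.mem_filter.mp hp).2
  -- coloring
  obtain ⟨c, hc⟩ := greedy_coloring (M ^ j) (fun x y => dist x y ≤ R)
    (fun x y h => by rwa [dist_comm]) S hdeg
  -- the decomposition
  refine ⟨fun i => (fun p => Metric.ball p ρ) '' {p : X | p ∈ S ∧ c p = i}, ?_, ?_, ?_, ?_⟩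
  · rintro i u ⟨p, -, rfl⟩
    exact Metric.isOpen_ball
  · intro x
    obtain ⟨p, hp, hxp⟩ := hcover x
    exact ⟨c p, Metric.ball p ρ, ⟨p, ⟨hp, rfl⟩, rfl⟩, Metric.mem_ball.mpr hxp⟩
  · rintro i u ⟨p, -, rfl⟩
    calc Metric.diam (Metric.ball p ρ) ≤ 2 * ρ := Metric.diam_ball hρpos.le
      _ < ε := h2ρ
  · rintro i u ⟨p, ⟨hpS, hpc⟩, rfl⟩ v ⟨q, ⟨hqS, hqc⟩, rfl⟩ huv
    have hpq : p ≠ q := by rintro rfl; exact huv rfl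
    have hfar : R < dist p q := by
      by_contra h
      push_neg at h
      exact hc p hpS q hqS hpq h (hpc.trans hqc.symm)
    have hlb : (k : ℝ) * ε < dist p q - 2 * ρ := by rw [hRdef] at hfar; linarith
    have hne : (Set.image2 dist (Metric.ball p ρ) (Metric.ball q ρ)).Nonempty :=
      ⟨dist p q, Set.mem_image2_of_mem (Metric.mem_ball_self hρpos)
        (Metric.mem_ball_self hρpos)⟩
    have hsInf : dist p q - 2 * ρ ≤ setDist (Metric.ball p ρ) (Metric.ball q ρ) := by
      refine le_csInf hne ?_
      rintro b ⟨a, ha, b', hb', rfl⟩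
      rw [Metric.mem_ball] at ha hb'
      have h4 := dist_triangle4 p a b' q
      rw [dist_comm p a] at h4
      linarith
    calc (k : ℝ) * ε < dist p q - 2 * ρ := hlb
      _ ≤ _ := hsInf
end

section
/- Let Γ be a finitely generated group with finite symmetric generating set F containing the identity, and let (X, Γ, {D_γ}, {θ_γ}) be a free partial dynamical system (meaning θ_γ(x) = θ_λ(x) implies γ = λ). Then any (d, r, M)-cover of the Cayley graph C_F(Γ) gives rise to a (d, F^r, #B_e^M(C_F(Γ)))-cover of the partial dynamical system: a cover of X by d+1 sets each of whose F^r-components has cardinality at most the cardinality of the ball of radius M in C_F(Γ). -/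
/-- `F^r`: products of at most `r` elements of `F` (the ball of radius `r` in the
word metric, since `e ∈ F`). -/
def wordBall {Γ : Type*} [Group Γ] (F : Finset Γ) (r : ℕ) : Set Γ :=
  {γ | ∃ l : List Γ, l.length ≤ r ∧ (∀ g ∈ l, g ∈ F) ∧ l.prod = γ}

/-- A (set-theoretic) partial action of a group `Γ` on `X`: domains `D_γ` and
maps `θ_γ : D_γ → D_{γ⁻¹}` with `D_e = X`, `θ_e = id`, each `θ_γ` a bijection
onto `D_{γ⁻¹}` with inverse `θ_{γ⁻¹}`, and `θ_γ ∘ θ_λ ⊆ θ_{γλ}`. -/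
structure PartialAction (Γ X : Type*) [Group Γ] where
  dom : Γ → Set X
  map : Γ → X → X
  dom_one : dom 1 = Set.univ
  map_one : ∀ x, map 1 x = x
  mapsTo : ∀ γ : Γ, Set.MapsTo (map γ) (dom γ) (dom γ⁻¹)
  inv : ∀ γ : Γ, ∀ x ∈ dom γ, map γ⁻¹ (map γ x) = x
  comp : ∀ (γ lam : Γ) (x : X), x ∈ dom lam → map lam x ∈ dom γ →
    x ∈ dom (γ * lam) ∧ map γ (map lam x) = map (γ * lam) x

/-- The orbit-ball `B_x^P` of a partial dynamical system. -/
def PartialAction.orbBall {Γ X : Type*} [Group Γ] (θ : PartialAction Γ X)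
    (F : Finset Γ) (P : ℕ) (x : X) : Set X :=
  {y | ∃ γ ∈ wordBall F P, x ∈ θ.dom γ ∧ θ.map γ x = y}

/-- `x` and `y` lie in the same `S`-component of `A` for the partial system `θ`. -/
def PartialAction.sameComp {Γ X : Type*} [Group Γ] (θ : PartialAction Γ X)
    (S : Set Γ) (A : Set X) (x y : X) : Prop :=
  ∃ c : List X, (∀ z ∈ c, z ∈ A) ∧
    c.Chain' (fun a b => ∃ γ ∈ S, a ∈ θ.dom γ ∧ θ.map γ a = b) ∧
    c.head? = some x ∧ c.getLast? = some y

lemma wordBall_finite {Γ : Type*} [Group Γ] (F : Finset Γ) : ∀ M, (wordBall F M).Finite := by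
  intro M
  induction M with
  | zero =>
    refine (Set.finite_singleton (1 : Γ)).subset ?_
    rintro γ ⟨l, hl, -, hprod⟩
    have : l = [] := List.length_eq_zero_iff.mp (Nat.le_zero.mp hl)
    simp [this] at hprod
    simp [← hprod]
  | succ M ih =>
    refine (ih.union ((F.finite_toSet.biUnion fun g _ => ih.image (g * ·)))).subset ?_
    rintro γ ⟨l, hl, hmem, hprod⟩
    match l with
    | [] => exact Or.inl ⟨[], by simp, by simp, hprod⟩
    | g :: t =>
      refine Or.inr (Set.mem_biUnion (hmem g (by simp)) ?_)
      refine ⟨t.prod, ⟨t, ?_, fun z hz => hmem z (by simp [hz]), rfl⟩, by simpa using hprod⟩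
      simpa using Nat.succ_le_succ_iff.mp (by simpa using hl)

/-- A `(d, r, M)`-cover of the Cayley graph `C_F(Γ)` (a cover of `Γ` by `d+1`
sets whose `r`-components have diameter at most `M`, i.e. any two points `x, y`
of the same `r`-component satisfy `y * x⁻¹ ∈ F^M`) gives rise to a
`(d, F^r, #B_e^M(C_F(Γ)))`-cover for any free partial dynamical system: a cover
of `X` by `d+1` sets whose `F^r`-components have cardinality at most
`#(F^M)`. -/
theorem stmt_9 {Γ X : Type*} [Group Γ]
    (F : Finset Γ) (hsym : ∀ γ ∈ F, γ⁻¹ ∈ F) (he : (1 : Γ) ∈ F)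
    (θ : PartialAction Γ X)
    (hfree : ∀ (γ lam : Γ) (x : X), x ∈ θ.dom γ → x ∈ θ.dom lam →
      θ.map γ x = θ.map lam x → γ = lam)
    (d r M : ℕ) (W : Fin (d + 1) → Set Γ)
    (hWcov : ∀ g : Γ, ∃ i, g ∈ W i)
    (hWbdd : ∀ i, ∀ x ∈ W i, ∀ y ∈ W i,
      (∃ c : List Γ, (∀ z ∈ c, z ∈ W i) ∧
        c.Chain' (fun a b => b * a⁻¹ ∈ wordBall F r) ∧
        c.head? = some x ∧ c.getLast? = some y) → y * x⁻¹ ∈ wordBall F M) :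
    ∃ V : Fin (d + 1) → Set X,
      (∀ x : X, ∃ i, x ∈ V i) ∧
      ∀ i, ∀ x ∈ V i,
        {y | θ.sameComp (wordBall F r) (V i) x y}.ncard ≤
          (wordBall F M).ncard := by
  classical
  set R : X → X → Prop := fun x y => ∃ γ, x ∈ θ.dom γ ∧ θ.map γ x = y with hRdef
  have hrefl : ∀ x, R x x := fun x => ⟨1, by simp [θ.dom_one], θ.map_one x⟩
  have hsymm : ∀ {x y}, R x y → R y x := by
    rintro x y ⟨γ, hx, hxy⟩
    exact ⟨γ⁻¹, hxy ▸ θ.mapsTo γ hx, by rw [← hxy]; exact θ.inv γ x hx⟩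
  have htrans : ∀ {x y z}, R x y → R y z → R x z := by
    rintro x y z ⟨γ, hx, rfl⟩ ⟨lam, hy, rfl⟩
    obtain ⟨h1, h2⟩ := θ.comp lam γ x hx hy
    exact ⟨lam * γ, h1, h2.symm⟩
  let s : Setoid X := ⟨R, fun x => hrefl x, hsymm, htrans⟩
  let rep : X → X := fun x => (Quotient.mk s x).out
  have hrep : ∀ x, R (rep x) x := fun x => Quotient.mk_out (s := s) x
  have hrep_eq : ∀ {x y}, R x y → rep x = rep y := fun h =>
    congrArg Quotient.out (Quotient.sound h)
  let g : X → Γ := fun x => (hrep x).choose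
  have hdom : ∀ x, rep x ∈ θ.dom (g x) := fun x => (hrep x).choose_spec.1
  have hmap : ∀ x, θ.map (g x) (rep x) = x := fun x => (hrep x).choose_spec.2
  have huniq : ∀ (x : X) (γ : Γ), rep x ∈ θ.dom γ → θ.map γ (rep x) = x → γ = g x :=
    fun x γ h1 h2 => hfree γ (g x) (rep x) h1 (hdom x) (by rw [h2, hmap x])
  have hstep : ∀ a b : X, (∃ μ ∈ wordBall F r, a ∈ θ.dom μ ∧ θ.map μ a = b) →
      rep a = rep b ∧ g b * (g a)⁻¹ ∈ wordBall F r := by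
    rintro a b ⟨μ, hμ, hadom, hab⟩
    have hre : rep a = rep b := hrep_eq ⟨μ, hadom, hab⟩
    have hadom' : θ.map (g a) (rep a) ∈ θ.dom μ := by rw [hmap a]; exact hadom
    obtain ⟨hd, hcomp⟩ := θ.comp μ (g a) (rep a) (hdom a) hadom'
    have hb : θ.map (μ * g a) (rep a) = b := by rw [← hcomp, hmap a, hab]
    have hgb := huniq b (μ * g a) (hre ▸ hd) (hre ▸ hb)
    refine ⟨hre, ?_⟩
    rw [← hgb]
    simpa using hμ
  refine ⟨fun i => {x | g x ∈ W i}, fun x => hWcov (g x), ?_⟩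
  intro i x hx
  set V : Set X := {x | g x ∈ W i} with hV
  have key : ∀ (u : X) (t : List X),
      List.Chain (fun a b => ∃ γ ∈ wordBall F r, a ∈ θ.dom γ ∧ θ.map γ a = b) u t →
      ∀ z ∈ t, rep z = rep u := by
    intro u t h
    induction t generalizing u with
    | nil => simp
    | cons b t' ih0 =>
      obtain ⟨hs, ht⟩ := List.isChain_cons_cons.mp h
      have ih := ih0 b ht
      intro z hz
      rcases List.mem_cons.mp hz with rfl | hz'
      · exact ((hstep _ _ hs).1).symm
      · rw [ih z hz', (hstep _ _ hs).1]
  have hbound : ∀ y, θ.sameComp (wordBall F r) V x y →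
      rep y = rep x ∧ g y * (g x)⁻¹ ∈ wordBall F M := by
    rintro y ⟨c, hcV, hchain, hhead, hlast⟩
    have hyc : y ∈ c := by
      obtain ⟨hne, rfl⟩ := List.mem_getLast?_eq_getLast (l := c) (Option.mem_def.mpr hlast)
      exact List.getLast_mem hne
    obtain ⟨u, t, rfl⟩ : ∃ u t, c = u :: t := by
      cases c with
      | nil => simp at hhead
      | cons u t => exact ⟨u, t, rfl⟩
    have hux : u = x := by simpa using hhead
    subst hux
    have hC : List.Chain (fun a b => ∃ γ ∈ wordBall F r, a ∈ θ.dom γ ∧ θ.map γ a = b) u t :=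
      hchain
    have hrepy : rep y = rep u := by
      rcases List.mem_cons.mp hyc with rfl | hyt
      · rfl
      · exact key u t hC y hyt
    refine ⟨hrepy, ?_⟩
    refine hWbdd i (g u) hx (g y) (hcV y hyc) ⟨(u :: t).map g, ?_, ?_, ?_, ?_⟩
    · rintro z hz
      obtain ⟨w, hw, rfl⟩ := List.mem_map.mp hz
      exact hcV w hw
    · exact (List.isChain_map g).mpr (hchain.imp fun a b h => (hstep a b h).2)
    · simp
    · rw [List.getLast?_map, hlast]; rfl
  have hinj : Set.InjOn (fun y => g y * (g x)⁻¹)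
      {y | θ.sameComp (wordBall F r) V x y} := by
    intro y hy y' hy' hff
    have hg : g y = g y' := mul_right_cancel hff
    have h1 := hmap y
    rw [(hbound y hy).1, hg, ← (hbound y' hy').1, hmap y'] at h1
    exact h1.symm
  calc {y | θ.sameComp (wordBall F r) V x y}.ncard
      = ((fun y => g y * (g x)⁻¹) '' {y | θ.sameComp (wordBall F r) V x y}).ncard :=
        (Set.ncard_image_of_injOn hinj).symm
    _ ≤ (wordBall F M).ncard := by
        refine Set.ncard_le_ncard ?_ (wordBall_finite F M)
        rintro γ ⟨y, hy, rfl⟩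
        exact (hbound y hy).2
end
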